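/- Let (E, 𝓔) be a measurable space, m a σ-finite measure on E, and κ a kernel from E to E such that M := sup_{x ∈ E} κ(x, E) < ∞ and such that the measure m ⊗ κ on E × E (defined by (m ⊗ κ)(A) = ∫_E κ(x, {y : (x,y) ∈ A}) m(dx)) is invariant under the coordinate swap (x,y) ↦ (y,x). Then for every nonnegative measurable function f on E, ∫_E ( ∫_E f(y) κ(x,dy) )² m(dx) ≤ M² · ∫_E f(x)² m(dx). -/

import Mathlib

open MeasureTheory ProbabilityTheory
open scoped ENNReal

lemma cs_aux {α : Type*} [MeasurableSpace α] (μ : Measure α) (f : α → ℝ≥0∞)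
    (hf : Measurable f) :
    (∫⁻ x, f x ∂μ) ^ 2 ≤ μ Set.univ * ∫⁻ x, f x ^ 2 ∂μ := by
  have hpq : Real.HolderConjugate 2 2 := Real.HolderConjugate.two_two
  have h := ENNReal.lintegral_mul_le_Lp_mul_Lq μ hpq hf.aemeasurable
    (aemeasurable_const (b := (1 : ℝ≥0∞)))
  simp only [Pi.mul_apply, mul_one, one_mul, ENNReal.one_rpow, lintegral_const] at h
  have hsq : ∫⁻ x, f x ^ (2:ℝ) ∂μ = ∫⁻ x, f x ^ 2 ∂μ := by
    refine lintegral_congr fun x => ?_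
    rw [← ENNReal.rpow_natCast (f x) 2]; norm_num
  calc (∫⁻ x, f x ∂μ) ^ 2
      ≤ ((∫⁻ x, f x ^ (2:ℝ) ∂μ) ^ (1/2 : ℝ) * μ Set.univ ^ (1/2 : ℝ)) ^ 2 := by
        gcongr
    _ = μ Set.univ * ∫⁻ x, f x ^ 2 ∂μ := by
        rw [mul_pow, ← ENNReal.rpow_natCast ((∫⁻ x, f x ^ (2:ℝ) ∂μ) ^ (1/2:ℝ)) 2,
          ← ENNReal.rpow_natCast (μ Set.univ ^ (1/2:ℝ)) 2,
          ← ENNReal.rpow_mul, ← ENNReal.rpow_mul]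
        norm_num [hsq, mul_comm]

/-- Abstract Cauchy–Schwarz/symmetry bound: if `κ` is a kernel with total masses
bounded by `M` and `m ⊗ κ` is invariant under the coordinate swap, then
`∫ (∫ f dκ(x))² dm ≤ M² ∫ f² dm` for every nonnegative measurable `f`. -/
theorem stmt_14 {E : Type*} [MeasurableSpace E] (m : Measure E) [SigmaFinite m]
    (κ : Kernel E E) [IsSFiniteKernel κ]
    (M : ℝ≥0∞) (hM : M < ⊤) (hκM : ∀ x, κ x Set.univ ≤ M)
    (hsym : (m.compProd κ).map Prod.swap = m.compProd κ)
    (f : E → ℝ≥0∞) (hf : Measurable f) :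
    ∫⁻ x, (∫⁻ y, f y ∂(κ x)) ^ 2 ∂m ≤ M ^ 2 * ∫⁻ x, (f x) ^ 2 ∂m := by
  set g : E → ℝ≥0∞ := fun x => f x ^ 2 with hg
  have hgm : Measurable g := hf.pow_const 2
  have key : ∫⁻ x, ∫⁻ y, g y ∂(κ x) ∂m ≤ M * ∫⁻ x, g x ∂m := by
    have h1 : ∫⁻ x, ∫⁻ y, g y ∂(κ x) ∂m = ∫⁻ p, g p.2 ∂(m.compProd κ) :=
      (Measure.lintegral_compProd (show Measurable fun p : E × E => g p.2 from hgm.comp measurable_snd)).symm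
    have h2 : ∫⁻ p, g p.2 ∂(m.compProd κ) = ∫⁻ p, g p.1 ∂(m.compProd κ) := by
      conv_lhs => rw [← hsym]
      rw [lintegral_map (show Measurable fun p : E × E => g p.2 from hgm.comp measurable_snd) measurable_swap]; rfl
    have h3 : ∫⁻ p, g p.1 ∂(m.compProd κ) = ∫⁻ x, g x * κ x Set.univ ∂m := by
      rw [Measure.lintegral_compProd (show Measurable fun p : E × E => g p.1 from hgm.comp measurable_fst)]
      simp [lintegral_const]
    rw [h1, h2, h3]
    calc ∫⁻ x, g x * κ x Set.univ ∂m ≤ ∫⁻ x, g x * M ∂m := by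
          refine lintegral_mono fun x => ?_
          exact mul_le_mul_right (hκM x) _
      _ = M * ∫⁻ x, g x ∂m := by
          simp_rw [mul_comm]; exact lintegral_const_mul M hgm
  calc ∫⁻ x, (∫⁻ y, f y ∂(κ x)) ^ 2 ∂m
      ≤ ∫⁻ x, M * ∫⁻ y, g y ∂(κ x) ∂m := by
        refine lintegral_mono fun x => ?_
        exact (cs_aux (κ x) f hf).trans (mul_le_mul_left (hκM x) _)
    _ = M * ∫⁻ x, ∫⁻ y, g y ∂(κ x) ∂m := by
        exact lintegral_const_mul M (Measurable.lintegral_kernel_prod_right' (κ := κ) (hgm.comp measurable_snd))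
    _ ≤ M * (M * ∫⁻ x, g x ∂m) := mul_le_mul_right key M
    _ = M ^ 2 * ∫⁻ x, (f x) ^ 2 ∂m := by ring
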